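/- If d₁, d₂ are independent, identically distributed random variables taking values in the natural numbers whose common distribution has a non-decreasing hazard rate (i.e., P[d = k | d ≥ k] is non-decreasing in k), then for any integers i < j, P[i + d₁ ≤ j + d₂ | i + d₁ ≥ j] ≥ 1/2. -/

import Mathlib

open MeasureTheory

/-- If d₁, d₂ are i.i.d. ℕ-valued with a non-decreasing hazard rate
(P[d = k | d ≥ k] non-decreasing in k), then for integers i < j,
P[i + d₁ ≤ j + d₂ ∧ i + d₁ ≥ j] ≥ (1/2) · P[i + d₁ ≥ j]. -/
theorem stmt2 {Ω : Type*} [MeasurableSpace Ω] (ℙ : Measure Ω) [IsProbabilityMeasure ℙ]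
    (d₁ d₂ : Ω → ℕ) (hm1 : Measurable d₁) (hm2 : Measurable d₂)
    (hindep : ProbabilityTheory.IndepFun d₁ d₂ ℙ)
    (hid : Measure.map d₁ ℙ = Measure.map d₂ ℙ)
    (hhaz : ∀ k l : ℕ, k ≤ l → 0 < ℙ (d₁ ⁻¹' Set.Ici k) → 0 < ℙ (d₁ ⁻¹' Set.Ici l) →
      ℙ (d₁ ⁻¹' {k}) / ℙ (d₁ ⁻¹' Set.Ici k) ≤ ℙ (d₁ ⁻¹' {l}) / ℙ (d₁ ⁻¹' Set.Ici l))
    (i j : ℕ) (hij : i < j) :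
    (1/2) * ℙ {ω | j ≤ i + d₁ ω} ≤ ℙ {ω | i + d₁ ω ≤ j + d₂ ω ∧ j ≤ i + d₁ ω} := by
  classical
  set c := j - i with hc
  have hjc : j = i + c := by omega
  have hmeas : ∀ s : Set ℕ, MeasurableSet s := fun s => trivial
  set S : ℕ → ENNReal := fun k => ℙ (d₁ ⁻¹' Set.Ici k) with hSdef
  set p : ℕ → ENNReal := fun k => ℙ (d₁ ⁻¹' {k}) with hpdef
  have hd2 : ∀ s : Set ℕ, ℙ (d₂ ⁻¹' s) = ℙ (d₁ ⁻¹' s) := by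
    intro s
    rw [← Measure.map_apply hm2 (hmeas s), ← Measure.map_apply hm1 (hmeas s), hid]
  have hSne : ∀ k, S k ≠ ⊤ := fun k => measure_ne_top _ _
  have hpne : ∀ k, p k ≠ ⊤ := fun k => measure_ne_top _ _
  have hSmonoSet : ∀ k l : ℕ, k ≤ l → S l ≤ S k := by
    intro k l h
    exact measure_mono (Set.preimage_mono (Set.Ici_subset_Ici.mpr h))
  have hsplit : ∀ k, p k + S (k + 1) = S k := by
    intro k
    have hset : d₁ ⁻¹' Set.Ici k = d₁ ⁻¹' {k} ∪ d₁ ⁻¹' Set.Ici (k + 1) := by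
      ext ω; simp only [Set.mem_preimage, Set.mem_Ici, Set.mem_union, Set.mem_singleton_iff]
      omega
    have hdisj : Disjoint (d₁ ⁻¹' {k}) (d₁ ⁻¹' Set.Ici (k + 1)) := by
      rw [Set.disjoint_left]
      intro ω h1 h2
      simp only [Set.mem_preimage, Set.mem_singleton_iff] at h1
      simp only [Set.mem_preimage, Set.mem_Ici] at h2
      omega
    simp only [hSdef, hpdef]
    rw [hset, measure_union hdisj (hm1 (hmeas _))]
  -- real-valued versions
  set s : ℕ → ℝ := fun k => (S k).toReal with hsdef
  set q : ℕ → ℝ := fun k => (p k).toReal with hqdef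
  have hs0 : ∀ k, 0 ≤ s k := fun k => ENNReal.toReal_nonneg
  have hq0 : ∀ k, 0 ≤ q k := fun k => ENNReal.toReal_nonneg
  have hsS : ∀ k, s (k + 1) = s k - q k := by
    intro k
    have h2 : (p k + S (k + 1)).toReal = (S k).toReal := by rw [hsplit k]
    rw [ENNReal.toReal_add (hpne k) (hSne (k+1))] at h2
    simp only [hsdef, hqdef]; linarith
  have hsmono : ∀ k l : ℕ, k ≤ l → s l ≤ s k := by
    intro k l h
    exact ENNReal.toReal_le_toReal (hSne l) (hSne k) |>.mpr (hSmonoSet k l h)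
  -- cross-multiplied hazard inequality in ℝ
  have hcross : ∀ t : ℕ, 0 < S (c + t) →
      q t * s (c + t) ≤ q (c + t) * s t := by
    intro t hpos
    have hposT : 0 < S t := lt_of_lt_of_le hpos (hSmonoSet t (c + t) (by omega))
    have h := hhaz t (c + t) (by omega) hposT hpos
    have hne1 : p t / S t ≠ ⊤ := (ENNReal.div_lt_top (hpne t) (ne_of_gt hposT)).ne
    have hne2 : p (c + t) / S (c + t) ≠ ⊤ :=
      (ENNReal.div_lt_top (hpne (c + t)) (ne_of_gt hpos)).ne
    have hr := (ENNReal.toReal_le_toReal hne1 hne2).mpr h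
    rw [ENNReal.toReal_div, ENNReal.toReal_div] at hr
    have hsT : 0 < s t := ENNReal.toReal_pos (ne_of_gt hposT) (hSne t)
    have hsCT : 0 < s (c + t) := ENNReal.toReal_pos (ne_of_gt hpos) (hSne (c + t))
    rw [div_le_div_iff₀ hsT hsCT] at hr
    linarith
  -- key IFR lemma: s (c + t) ≤ s c * s t
  have hkey : ∀ t : ℕ, s (c + t) ≤ s c * s t := by
    intro t
    induction t with
    | zero =>
      have h1 : s 0 = 1 := by
        simp only [hsdef, hSdef]
        have h2 : d₁ ⁻¹' Set.Ici 0 = Set.univ := by ext ω; simp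
        rw [h2, measure_univ]; simp
      simp [h1]
    | succ t ih =>
      by_cases hCT : 0 < S (c + t)
      · have hsCT : 0 < s (c + t) := ENNReal.toReal_pos (ne_of_gt hCT) (hSne _)
        have hsT : 0 < s t := lt_of_lt_of_le hsCT (hsmono t (c + t) (by omega))
        have hs1 : 0 ≤ s (t + 1) := hs0 _
        have e1 : s (c + (t + 1)) = s (c + t) - q (c + t) := by
          rw [show c + (t + 1) = (c + t) + 1 by omega, hsS]
        have e2 : s (t + 1) = s t - q t := hsS t
        have h3 := hcross t hCT
        have ihm : s (c + t) * s (t + 1) ≤ s c * s t * s (t + 1) :=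
          mul_le_mul_of_nonneg_right ih hs1
        have main : s (c + (t + 1)) * s t ≤ (s c * s (t + 1)) * s t := by
          rw [e1]
          nlinarith [ihm, h3, e2, hs0 c, hq0 (c + t), hq0 t]
        exact le_of_mul_le_mul_right main hsT
      · have h0 : S (c + t) = 0 := le_antisymm (not_lt.mp hCT) zero_le
        have h1 : S (c + (t + 1)) = 0 :=
          le_antisymm (by
            calc S (c + (t + 1)) ≤ S (c + t) := hSmonoSet _ _ (by omega)
            _ = 0 := h0) zero_le
        have h2 : s (c + (t + 1)) = 0 := by simp [hsdef, h1]
        rw [h2]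
        positivity
  -- lift back to ENNReal
  have hkeyE : ∀ t : ℕ, S (c + t) ≤ S c * S t := by
    intro t
    have hne : S c * S t ≠ ⊤ := ENNReal.mul_ne_top (hSne c) (hSne t)
    rw [← ENNReal.toReal_le_toReal (hSne _) hne, ENNReal.toReal_mul]
    exact hkey t
  -- the events
  set A : Set Ω := {ω | j ≤ i + d₁ ω} with hAdef
  set U : Set Ω := {ω | j + d₂ ω < i + d₁ ω} with hUdef
  have hAeq : A = d₁ ⁻¹' Set.Ici c := by
    ext ω; simp only [hAdef, Set.mem_setOf_eq, Set.mem_preimage, Set.mem_Ici]; omega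
  have hApA : ℙ A = S c := by rw [hAeq]
  have hUA : U ⊆ A := by
    intro ω h
    simp only [hUdef, Set.mem_setOf_eq] at h
    simp only [hAdef, Set.mem_setOf_eq]
    omega
  -- U as a disjoint union
  have hUeq : U = ⋃ m : ℕ, (d₂ ⁻¹' {m} ∩ d₁ ⁻¹' Set.Ici (m + c + 1)) := by
    ext ω
    simp only [hUdef, Set.mem_setOf_eq, Set.mem_iUnion, Set.mem_inter_iff, Set.mem_preimage,
      Set.mem_singleton_iff, Set.mem_Ici]
    constructor
    · intro h; exact ⟨d₂ ω, rfl, by omega⟩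
    · rintro ⟨m, rfl, h⟩; omega
  have hUmeasParts : ∀ m : ℕ, MeasurableSet (d₂ ⁻¹' {m} ∩ d₁ ⁻¹' Set.Ici (m + c + 1)) :=
    fun m => (hm2 (hmeas _)).inter (hm1 (hmeas _))
  have hUmeas : MeasurableSet U := by
    rw [hUeq]; exact MeasurableSet.iUnion hUmeasParts
  have hUdisj : Pairwise (Function.onFun Disjoint
      fun m : ℕ => d₂ ⁻¹' {m} ∩ d₁ ⁻¹' Set.Ici (m + c + 1)) := by
    intro m n hmn
    simp only [Function.onFun]
    rw [Set.disjoint_left]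
    rintro ω ⟨h1, _⟩ ⟨h2, _⟩
    simp only [Set.mem_preimage, Set.mem_singleton_iff] at h1 h2
    exact hmn (h1 ▸ h2 ▸ rfl)
  have hPU : ℙ U = ∑' m : ℕ, p m * S (m + c + 1) := by
    rw [hUeq, measure_iUnion hUdisj hUmeasParts]
    congr 1
    ext m
    rw [hindep.symm.measure_inter_preimage_eq_mul _ _ (hmeas _) (hmeas _), hd2]
  -- the half bound: Σ := ∑' m, p m * S (m+1) ≤ 1/2
  set Sig : ENNReal := ∑' m : ℕ, p m * S (m + 1) with hSigdef
  have hhalf : Sig ≤ 1 / 2 := by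
    set V : Set Ω := ⋃ m : ℕ, (d₂ ⁻¹' {m} ∩ d₁ ⁻¹' Set.Ici (m + 1)) with hVdef
    set W : Set Ω := ⋃ m : ℕ, (d₁ ⁻¹' {m} ∩ d₂ ⁻¹' Set.Ici (m + 1)) with hWdef
    have hVparts : ∀ m : ℕ, MeasurableSet (d₂ ⁻¹' {m} ∩ d₁ ⁻¹' Set.Ici (m + 1)) :=
      fun m => (hm2 (hmeas _)).inter (hm1 (hmeas _))
    have hWparts : ∀ m : ℕ, MeasurableSet (d₁ ⁻¹' {m} ∩ d₂ ⁻¹' Set.Ici (m + 1)) :=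
      fun m => (hm1 (hmeas _)).inter (hm2 (hmeas _))
    have hVdisj : Pairwise (Function.onFun Disjoint
        fun m : ℕ => d₂ ⁻¹' {m} ∩ d₁ ⁻¹' Set.Ici (m + 1)) := by
      intro m n hmn
      simp only [Function.onFun]
      rw [Set.disjoint_left]
      rintro ω ⟨h1, _⟩ ⟨h2, _⟩
      simp only [Set.mem_preimage, Set.mem_singleton_iff] at h1 h2
      exact hmn (h1 ▸ h2 ▸ rfl)
    have hWdisj : Pairwise (Function.onFun Disjoint
        fun m : ℕ => d₁ ⁻¹' {m} ∩ d₂ ⁻¹' Set.Ici (m + 1)) := by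
      intro m n hmn
      simp only [Function.onFun]
      rw [Set.disjoint_left]
      rintro ω ⟨h1, _⟩ ⟨h2, _⟩
      simp only [Set.mem_preimage, Set.mem_singleton_iff] at h1 h2
      exact hmn (h1 ▸ h2 ▸ rfl)
    have hPV : ℙ V = Sig := by
      rw [hVdef, measure_iUnion hVdisj hVparts]
      congr 1; ext m
      rw [hindep.symm.measure_inter_preimage_eq_mul _ _ (hmeas _) (hmeas _), hd2]
    have hPW : ℙ W = Sig := by
      rw [hWdef, measure_iUnion hWdisj hWparts]
      congr 1; ext m
      rw [hindep.measure_inter_preimage_eq_mul _ _ (hmeas _) (hmeas _), hd2]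
    have hVW : Disjoint V W := by
      rw [Set.disjoint_left]
      intro ω hV hW
      simp only [hVdef, Set.mem_iUnion, Set.mem_inter_iff, Set.mem_preimage,
        Set.mem_singleton_iff, Set.mem_Ici] at hV
      simp only [hWdef, Set.mem_iUnion, Set.mem_inter_iff, Set.mem_preimage,
        Set.mem_singleton_iff, Set.mem_Ici] at hW
      obtain ⟨m, rfl, hm⟩ := hV
      obtain ⟨n, rfl, hn⟩ := hW
      omega
    have hsum : Sig + Sig ≤ 1 := by
      calc Sig + Sig = ℙ V + ℙ W := by rw [hPV, hPW]
        _ = ℙ (V ∪ W) := (measure_union hVW (MeasurableSet.iUnion hWparts)).symm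
        _ ≤ ℙ Set.univ := measure_mono (Set.subset_univ _)
        _ = 1 := measure_univ
    have h2 : 2 * Sig ≤ 1 := by rw [two_mul]; exact hsum
    rw [ENNReal.le_div_iff_mul_le (Or.inl (by norm_num)) (Or.inl (by norm_num)), mul_comm]
    exact h2
  -- bound ℙ U
  have hPUbound : ℙ U ≤ 1 / 2 * ℙ A := by
    rw [hPU, hApA]
    calc ∑' m : ℕ, p m * S (m + c + 1)
        ≤ ∑' m : ℕ, S c * (p m * S (m + 1)) := by
          apply ENNReal.tsum_le_tsum
          intro m
          have h := hkeyE (m + 1)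
          calc p m * S (m + c + 1) = p m * S (c + (m + 1)) := by ring_nf
            _ ≤ p m * (S c * S (m + 1)) := mul_le_mul_right h _
            _ = S c * (p m * S (m + 1)) := by ring
      _ = S c * Sig := ENNReal.tsum_mul_left
      _ ≤ S c * (1 / 2) := mul_le_mul_right hhalf _
      _ = 1 / 2 * S c := mul_comm _ _
  -- the target set is A \ U
  have hTeq : {ω | i + d₁ ω ≤ j + d₂ ω ∧ j ≤ i + d₁ ω} = A \ U := by
    ext ω
    simp only [Set.mem_setOf_eq, Set.mem_diff, hAdef, hUdef, Set.mem_setOf_eq]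
    omega
  rw [hTeq, measure_diff hUA hUmeas.nullMeasurableSet (measure_ne_top _ _)]
  refine ENNReal.le_sub_of_add_le_left (measure_ne_top _ _) ?_
  calc ℙ U + 1 / 2 * ℙ A ≤ 1 / 2 * ℙ A + 1 / 2 * ℙ A := add_le_add hPUbound le_rfl
    _ = (1 / 2 + 1 / 2) * ℙ A := (add_mul _ _ _).symm
    _ = 1 * ℙ A := by rw [ENNReal.add_halves]
    _ = ℙ A := one_mul _
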